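/- Let C be a finite tensor category over an algebraically closed field k and D a tensor category over k, and let F, G : C → D be right exact k-linear strong monoidal functors. Then the set Nat_⊗(F, G) of monoidal natural transformations F → G is finite. -/

import Mathlib

open CategoryTheory CategoryTheory.MonoidalCategory CategoryTheory.Limits

attribute [local instance] CategoryTheory.Abelian.hasFiniteBiproducts

namespace MonoidalNatTransFiniteAux

variable {k : Type*} [Field k]
variable {D : Type*} [Category D] [Abelian D] [Linear k D]
  [MonoidalCategory D] [MonoidalPreadditive D] [MonoidalLinear k D]

lemma comp_desc_eq_sum {m : ℕ} {Z W : D} (f : Fin m → D) (v : Z ⟶ ⨁ f) (u : ∀ j, f j ⟶ W) :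
    v ≫ biproduct.desc u = ∑ j, v ≫ biproduct.π f j ≫ u j := by
  calc v ≫ biproduct.desc u
      = v ≫ (∑ j, biproduct.π f j ≫ biproduct.ι f j) ≫ biproduct.desc u := by
        rw [biproduct.total, Category.id_comp]
    _ = ∑ j, v ≫ biproduct.π f j ≫ u j := by
        rw [Preadditive.sum_comp, Preadditive.comp_sum]
        simp

section Simple

variable [IsAlgClosed k] [Simple (𝟙_ D)] [∀ X Y : D, FiniteDimensional k (X ⟶ Y)]
  [∀ X : D, IsArtinianObject X]

lemma mono_desc_of_linearIndependent {m : ℕ} {U : D} {u : Fin m → (𝟙_ D ⟶ U)}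
    (hu : LinearIndependent k u) :
    Mono (biproduct.desc u : (⨁ fun _ : Fin m => 𝟙_ D) ⟶ U) := by
  set w := (biproduct.desc u : (⨁ fun _ : Fin m => 𝟙_ D) ⟶ U) with hw
  apply Abelian.mono_of_kernel_ι_eq_zero
  by_contra hk
  have hK : ¬ IsZero (kernel w) := fun hz => hk (hz.eq_zero_of_src _)
  let φ : simpleSubobject hK ⟶ ⨁ (fun _ : Fin m => 𝟙_ D) :=
    simpleSubobjectArrow hK ≫ kernel.ι w
  have hφw : φ ≫ w = 0 := by simp [φ, kernel.condition]
  have hφmono : Mono φ := mono_comp _ _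
  have hφne : φ ≠ 0 := by
    intro h0
    refine id_nonzero (simpleSubobject hK) ?_
    rw [← cancel_mono φ]
    simp [h0]
  obtain ⟨j, hj⟩ : ∃ j, φ ≫ biproduct.π _ j ≠ 0 := by
    by_contra hall
    push_neg at hall
    refine hφne ?_
    ext j
    simp [hall j]
  haveI : IsIso (φ ≫ biproduct.π _ j) := isIso_of_hom_simple hj
  set t : 𝟙_ D ⟶ ⨁ (fun _ : Fin m => 𝟙_ D) := inv (φ ≫ biproduct.π _ j) ≫ φ with ht
  have htw : t ≫ w = 0 := by
    rw [ht, Category.assoc, hφw, comp_zero]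
  have hc : ∀ i, ∃ c : k, c • 𝟙 (𝟙_ D) = t ≫ biproduct.π _ i := fun i =>
    endomorphism_simple_eq_smul_id k _
  choose c hcspec using hc
  have hsum : ∑ i, c i • u i = 0 := by
    have h1 := comp_desc_eq_sum _ t u
    rw [htw] at h1
    have : ∑ i, c i • u i = ∑ i, t ≫ biproduct.π _ i ≫ u i := by
      refine Finset.sum_congr rfl fun i _ => ?_
      rw [← Category.assoc, ← hcspec i, Linear.smul_comp, Category.id_comp]
    rw [this, ← h1]
  have hczero := Fintype.linearIndependent_iff.mp hu c hsum
  have hj1 : t ≫ biproduct.π _ j = 𝟙 (𝟙_ D) := by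
    rw [ht, Category.assoc, IsIso.inv_hom_id]
  have := hcspec j
  rw [hczero j, hj1, zero_smul] at this
  exact id_nonzero (𝟙_ D) this.symm

variable [RigidCategory D]

lemma eq_zero_of_sum_tensorUnit {m : ℕ} {A B U : D} {u : Fin m → (𝟙_ D ⟶ U)}
    (hu : LinearIndependent k u) (c : Fin m → (A ⟶ B))
    (h : ∑ j, (c j ⊗ₘ u j) = 0) : ∀ j, c j = 0 := by
  classical
  set w := (biproduct.desc u : (⨁ fun _ : Fin m => 𝟙_ D) ⟶ U) with hw
  haveI hmono : Mono w := mono_desc_of_linearIndependent hu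
  haveI : PreservesLimits (tensorLeft B) :=
    (tensorLeftAdjunction B (Bᘁ)).rightAdjoint_preservesLimits
  haveI : Mono (B ◁ w) := by
    have : Mono ((tensorLeft B).map w) := inferInstance
    simpa using this
  have step : ∀ j, (c j ≫ (ρ_ B).inv ≫ (B ◁ biproduct.ι (fun _ : Fin m => 𝟙_ D) j)) ≫ (B ◁ w)
      = (ρ_ A).inv ≫ (c j ⊗ₘ u j) := by
    intro j
    have h1 : B ◁ u j = (B ◁ biproduct.ι (fun _ : Fin m => 𝟙_ D) j) ≫ (B ◁ w) := by
      rw [← MonoidalCategory.whiskerLeft_comp, hw, biproduct.ι_desc]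
    rw [MonoidalCategory.tensorHom_def, h1, MonoidalCategory.whiskerRight_id]
    simp
  have key : (∑ j, c j ≫ (ρ_ B).inv ≫ (B ◁ biproduct.ι (fun _ : Fin m => 𝟙_ D) j)) ≫ (B ◁ w)
      = 0 := by
    rw [Preadditive.sum_comp]
    calc ∑ j, (c j ≫ (ρ_ B).inv ≫ (B ◁ biproduct.ι (fun _ : Fin m => 𝟙_ D) j)) ≫ (B ◁ w)
        = ∑ j, (ρ_ A).inv ≫ (c j ⊗ₘ u j) := Finset.sum_congr rfl fun j _ => step j
      _ = (ρ_ A).inv ≫ ∑ j, (c j ⊗ₘ u j) := by rw [Preadditive.comp_sum]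
      _ = 0 := by rw [h, comp_zero]
  have hz : ∑ j, c j ≫ (ρ_ B).inv ≫ (B ◁ biproduct.ι (fun _ : Fin m => 𝟙_ D) j) = 0 :=
    (cancel_mono (B ◁ w)).mp (by rw [key, zero_comp])
  intro i
  have := congrArg (fun v => v ≫ (B ◁ biproduct.π (fun _ : Fin m => 𝟙_ D) i)) hz
  simp only [Preadditive.sum_comp, Category.assoc, ← MonoidalCategory.whiskerLeft_comp,
    zero_comp] at this
  rw [Finset.sum_eq_single i] at this
  · rw [biproduct.ι_π_self] at this
    simpa using this
  · intro j _ hji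
    rw [biproduct.ι_π_ne _ hji]
    simp
  · simp

lemma smul_tensor' (r : k) {A B Cc E : D} (f : A ⟶ B) (g : Cc ⟶ E) :
    (r • f) ⊗ₘ g = r • (f ⊗ₘ g) := by
  rw [MonoidalCategory.tensorHom_def, MonoidalCategory.tensorHom_def, MonoidalLinear.smul_whiskerRight, Linear.smul_comp]

lemma tensor_smul' (r : k) {A B Cc E : D} (f : A ⟶ B) (g : Cc ⟶ E) :
    f ⊗ₘ (r • g) = r • (f ⊗ₘ g) := by
  rw [MonoidalCategory.tensorHom_def, MonoidalCategory.tensorHom_def, MonoidalLinear.whiskerLeft_smul, Linear.comp_smul]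

lemma eq_zero_of_sum_tensor {m : ℕ} {A B Cc E : D} {b : Fin m → (Cc ⟶ E)}
    (hb : LinearIndependent k b) (c : Fin m → (A ⟶ B))
    (h : ∑ j, (c j ⊗ₘ b j) = 0) : ∀ j, c j = 0 := by
  let nm : (Cc ⟶ E) →ₗ[k] (𝟙_ D ⟶ E ⊗ (Ccᘁ)) :=
    { toFun := fun f => η_ Cc (Ccᘁ) ≫ (f ▷ (Ccᘁ))
      map_add' := fun f g => by simp
      map_smul' := fun r f => by simp }
  have hretr : ∀ f : Cc ⟶ E,
      (λ_ Cc).inv ≫ ((nm f) ▷ Cc) ≫ (α_ E (Ccᘁ) Cc).hom ≫ (E ◁ ε_ Cc (Ccᘁ)) ≫ (ρ_ E).hom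
        = f := by
    intro f
    dsimp only [nm, LinearMap.coe_mk, AddHom.coe_mk]
    simp only [comp_whiskerRight, Category.assoc]
    rw [associator_naturality_left_assoc, ← whisker_exchange_assoc,
      ExactPairing.evaluation_coevaluation_assoc]
    simp
  have hninj : Function.Injective nm := fun f g hfg => by rw [← hretr f, ← hretr g, hfg]
  have hn : LinearIndependent k (fun j => nm (b j)) := hb.map' nm (LinearMap.ker_eq_bot.mpr hninj)
  have trans : ∀ j, (c j ⊗ₘ nm (b j)) =
      (A ◁ η_ Cc (Ccᘁ)) ≫ (α_ A Cc (Ccᘁ)).inv ≫ ((c j ⊗ₘ b j) ▷ (Ccᘁ)) ≫ (α_ B E (Ccᘁ)).hom := by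
    intro j
    calc c j ⊗ₘ nm (b j)
        = (𝟙 A ≫ c j) ⊗ₘ (η_ Cc (Ccᘁ) ≫ (b j ▷ (Ccᘁ))) := by
          dsimp only [nm, LinearMap.coe_mk, AddHom.coe_mk]
          rw [Category.id_comp]
      _ = (𝟙 A ⊗ₘ η_ Cc (Ccᘁ)) ≫ (c j ⊗ₘ (b j ▷ (Ccᘁ))) := by rw [← tensorHom_comp_tensorHom]
      _ = (A ◁ η_ Cc (Ccᘁ)) ≫ (c j ⊗ₘ (b j ⊗ₘ 𝟙 (Ccᘁ))) := by rw [id_tensorHom, tensorHom_id]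
      _ = (A ◁ η_ Cc (Ccᘁ)) ≫ (α_ A Cc (Ccᘁ)).inv ≫ ((c j ⊗ₘ b j) ⊗ₘ 𝟙 (Ccᘁ))
            ≫ (α_ B E (Ccᘁ)).hom := by
          rw [associator_naturality (c j) (b j) (𝟙 (Ccᘁ)), Iso.inv_hom_id_assoc]
      _ = (A ◁ η_ Cc (Ccᘁ)) ≫ (α_ A Cc (Ccᘁ)).inv ≫ ((c j ⊗ₘ b j) ▷ (Ccᘁ))
            ≫ (α_ B E (Ccᘁ)).hom := by rw [tensorHom_id]
  have h2 : ∑ j, (c j ⊗ₘ nm (b j)) = 0 := by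
    calc ∑ j, (c j ⊗ₘ nm (b j))
        = ∑ j, (A ◁ η_ Cc (Ccᘁ)) ≫ (α_ A Cc (Ccᘁ)).inv ≫ ((c j ⊗ₘ b j) ▷ (Ccᘁ))
            ≫ (α_ B E (Ccᘁ)).hom := Finset.sum_congr rfl fun j _ => trans j
      _ = (A ◁ η_ Cc (Ccᘁ)) ≫ (α_ A Cc (Ccᘁ)).inv ≫ ((∑ j, c j ⊗ₘ b j) ▷ (Ccᘁ))
            ≫ (α_ B E (Ccᘁ)).hom := by
          simp only [sum_whiskerRight, Preadditive.sum_comp, Preadditive.comp_sum]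
      _ = 0 := by rw [h]; simp
  exact eq_zero_of_sum_tensorUnit hn c h2

lemma coeff_eq_zero {n : ℕ} {A B : D} {a : Fin n → (A ⟶ B)} (ha : LinearIndependent k a)
    (d : Fin n → Fin n → k) (h : ∑ i, ∑ j, d i j • (a i ⊗ₘ a j) = 0) : ∀ i j, d i j = 0 := by
  have h' : ∑ j, ((∑ i, d i j • a i) ⊗ₘ a j) = 0 := by
    rw [← h, Finset.sum_comm]
    refine Finset.sum_congr rfl fun j _ => ?_
    rw [sum_tensor]
    exact Finset.sum_congr rfl fun i _ => smul_tensor' _ _ _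
  have hz := eq_zero_of_sum_tensor ha _ h'
  intro i j
  exact (Fintype.linearIndependent_iff.mp ha _ (hz j)) i

end Simple

end MonoidalNatTransFiniteAux

open MonoidalNatTransFiniteAux in

/-- Let `C` be a finite tensor category over an algebraically closed
field `k` (a tensor category with a projective generator), `D` a tensor category over
`k`, and `F, G : C ⥤ D` right exact `k`-linear strong monoidal functors. Then the set
of monoidal natural transformations `F ⟶ G` is finite. -/
theorem monoidalNatTrans_finite
    (k : Type*) [Field k] [IsAlgClosed k]
    -- C is a finite tensor category over k:
    {C : Type*} [Category C] [Abelian C] [Linear k C]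
    [MonoidalCategory C] [MonoidalPreadditive C] [MonoidalLinear k C]
    [RigidCategory C] [Simple (𝟙_ C)]
    [∀ X : C, IsNoetherianObject X] [∀ X : C, IsArtinianObject X]
    [∀ X Y : C, FiniteDimensional k (X ⟶ Y)]
    (P : C) [Projective P]
    (hP : ∀ X : C, ∃ (n : ℕ) (q : (⨁ fun _ : Fin n => P) ⟶ X), Epi q)
    -- D is a tensor category over k:
    {D : Type*} [Category D] [Abelian D] [Linear k D]
    [MonoidalCategory D] [MonoidalPreadditive D] [MonoidalLinear k D]
    [RigidCategory D] [Simple (𝟙_ D)]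
    [∀ X : D, IsNoetherianObject X] [∀ X : D, IsArtinianObject X]
    [∀ X Y : D, FiniteDimensional k (X ⟶ Y)]
    -- F and G are right exact k-linear strong monoidal functors:
    (F G : C ⥤ D) [F.Monoidal] [G.Monoidal]
    [F.Additive] [F.Linear k] [PreservesFiniteColimits F]
    [G.Additive] [G.Linear k] [PreservesFiniteColimits G] :
    Finite {g : F ⟶ G // NatTrans.IsMonoidal g} := by
  classical
  -- the evaluation linear maps
  let ev : ∀ X : C, (F ⟶ G) →ₗ[k] (F.obj X ⟶ G.obj X) := fun X =>
    { toFun := fun t => t.app X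
      map_add' := fun s t => NatTrans.app_add X s t
      map_smul' := fun r t => NatTrans.app_smul X r t }
  -- evaluation at the projective generator is injective
  have hev : ∀ t : F ⟶ G, t.app P = 0 → t = 0 := by
    intro t ht
    ext X
    obtain ⟨n, q, hq⟩ := hP X
    haveI := hq
    haveI : Epi (F.map q) := inferInstance
    have h0 : t.app (⨁ fun _ : Fin n => P) = 0 := by
      rw [← cancel_epi (F.mapBiproduct (fun _ : Fin n => P)).inv, comp_zero,
        Functor.mapBiproduct_inv]
      ext j
      simp [biproduct.ι_desc_assoc, ht]
    rw [NatTrans.app_zero, ← cancel_epi (F.map q), NatTrans.naturality, h0, zero_comp, comp_zero]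
  have evP_inj : Function.Injective (ev P) := by
    rw [injective_iff_map_eq_zero]
    exact fun t ht => hev t ht
  haveI : FiniteDimensional k (F ⟶ G) := FiniteDimensional.of_injective (ev P) evP_inj
  -- the "comultiplication" evaluated at (P, P), as a linear map
  let Θ : (F ⟶ G) →ₗ[k] (F.obj P ⊗ F.obj P ⟶ G.obj P ⊗ G.obj P) :=
    { toFun := fun t => Functor.LaxMonoidal.μ F P P ≫ t.app (P ⊗ P) ≫
        Functor.OplaxMonoidal.δ G P P
      map_add' := fun s t => by
        simp [NatTrans.app_add, Preadditive.comp_add, Preadditive.add_comp]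
      map_smul' := fun r t => by
        simp [NatTrans.app_smul, Linear.comp_smul, Linear.smul_comp] }
  have hΘ : ∀ (g : F ⟶ G), NatTrans.IsMonoidal g → Θ g = (ev P) g ⊗ₘ (ev P) g := by
    intro g hg
    show Functor.LaxMonoidal.μ F P P ≫ g.app (P ⊗ P) ≫ Functor.OplaxMonoidal.δ G P P
      = g.app P ⊗ₘ g.app P
    rw [← Category.assoc, hg.tensor P P, Category.assoc, Functor.Monoidal.μ_δ,
      Category.comp_id]
  -- the "counit", as a linear map
  let Ul : (F ⟶ G) →ₗ[k] (𝟙_ D ⟶ G.obj (𝟙_ C)) :=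
    { toFun := fun t => Functor.LaxMonoidal.ε F ≫ t.app (𝟙_ C)
      map_add' := fun s t => by simp [NatTrans.app_add, Preadditive.comp_add]
      map_smul' := fun r t => by simp [NatTrans.app_smul, Linear.comp_smul] }
  have hUl : ∀ (g : F ⟶ G), NatTrans.IsMonoidal g → Ul g = Functor.LaxMonoidal.ε G := by
    intro g hg
    exact hg.unit
  have hεne : (Functor.LaxMonoidal.ε G : 𝟙_ D ⟶ G.obj (𝟙_ C)) ≠ 0 := by
    intro h0
    have : 𝟙 (𝟙_ D) = 0 := by
      rw [← Functor.Monoidal.ε_η (F := G), h0, zero_comp]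
    exact id_nonzero _ this
  -- distinct monoidal natural transformations are linearly independent
  have indep : ∀ n : ℕ, ∀ f : Fin n → (F ⟶ G), Function.Injective f →
      (∀ i, NatTrans.IsMonoidal (f i)) → LinearIndependent k f := by
    intro n
    induction n using Nat.strong_induction_on with
    | _ n IH =>
      intro f hinj hmon
      by_contra hdep
      obtain ⟨c, hsum, i0, hi0⟩ := Fintype.not_linearIndependent_iff.mp hdep
      cases n with
      | zero => exact i0.elim0
      | succ m =>
        set h : Fin m → (F ⟶ G) := fun j => f (i0.succAbove j) with hh
        have hinj' : Function.Injective h := fun a b hab =>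
          Fin.succAbove_right_injective (hinj hab)
        have hmon' : ∀ j, NatTrans.IsMonoidal (h j) := fun j => hmon _
        have hindep : LinearIndependent k h := IH m (Nat.lt_succ_self m) h hinj' hmon'
        set e : Fin m → k := fun j => -((c i0)⁻¹ * c (i0.succAbove j)) with he
        have hrepr : f i0 = ∑ j, e j • h j := by
          rw [Fin.sum_univ_succAbove (fun i => c i • f i) i0] at hsum
          have h1 : c i0 • f i0 = - ∑ j, c (i0.succAbove j) • f (i0.succAbove j) := by
            rw [eq_neg_iff_add_eq_zero]
            exact hsum
          calc f i0 = (c i0)⁻¹ • (c i0 • f i0) := by rw [inv_smul_smul₀ hi0]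
            _ = ∑ j, e j • h j := by
                rw [h1, smul_neg, Finset.smul_sum]
                rw [← Finset.sum_neg_distrib]
                refine Finset.sum_congr rfl fun j _ => ?_
                rw [he, hh, smul_smul, neg_smul]
        have ha : LinearIndependent k (fun j => (ev P) (h j)) :=
          hindep.map' (ev P) (LinearMap.ker_eq_bot.mpr evP_inj)
        have hb : (ev P) (f i0) = ∑ j, e j • (ev P) (h j) := by
          rw [hrepr, map_sum]
          exact Finset.sum_congr rfl fun j _ => by rw [map_smul]
        have htens : ((ev P) (f i0)) ⊗ₘ ((ev P) (f i0))
            = ∑ j, e j • (((ev P) (h j)) ⊗ₘ ((ev P) (h j))) := by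
          have h1 : Θ (f i0) = ((ev P) (f i0)) ⊗ₘ ((ev P) (f i0)) := hΘ _ (hmon i0)
          have h2 : Θ (f i0) = ∑ j, e j • Θ (h j) := by
            rw [hrepr, map_sum]
            exact Finset.sum_congr rfl fun j _ => by rw [map_smul]
          rw [← h1, h2]
          exact Finset.sum_congr rfl fun j _ => by rw [hΘ _ (hmon' j)]
        have expand : ((ev P) (f i0)) ⊗ₘ ((ev P) (f i0))
            = ∑ i, ∑ j, (e i * e j) • (((ev P) (h i)) ⊗ₘ ((ev P) (h j))) := by
          rw [hb, sum_tensor]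
          refine Finset.sum_congr rfl fun i _ => ?_
          rw [smul_tensor', tensor_sum, Finset.smul_sum]
          refine Finset.sum_congr rfl fun j _ => ?_
          rw [tensor_smul', smul_smul]
        have hdd : ∑ i, ∑ j,
            (e i * e j - if i = j then e j else 0) •
              (((ev P) (h i)) ⊗ₘ ((ev P) (h j))) = 0 := by
          have hdiag : ∑ i, ∑ j, (if i = j then e j else 0) •
              (((ev P) (h i)) ⊗ₘ ((ev P) (h j)))
              = ∑ j, e j • (((ev P) (h j)) ⊗ₘ ((ev P) (h j))) := by
            rw [Finset.sum_comm]
            refine Finset.sum_congr rfl fun j _ => ?_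
            rw [Finset.sum_eq_single j]
            · rw [if_pos rfl]
            · intro i _ hij
              rw [if_neg hij, zero_smul]
            · intro hj
              exact absurd (Finset.mem_univ j) hj
          simp only [sub_smul, Finset.sum_sub_distrib]
          rw [hdiag, ← expand, htens, sub_self]
        have hzero := coeff_eq_zero ha _ hdd
        have hunit : (Functor.LaxMonoidal.ε G : 𝟙_ D ⟶ G.obj (𝟙_ C))
            = (∑ j, e j) • Functor.LaxMonoidal.ε G := by
          conv_lhs => rw [← hUl _ (hmon i0)]
          rw [hrepr, map_sum, Finset.sum_smul]
          exact Finset.sum_congr rfl fun j _ => by rw [map_smul, hUl _ (hmon' j)]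
        have hsum1 : (∑ j, e j) = 1 := by
          by_contra hne
          have : (1 - ∑ j, e j) • (Functor.LaxMonoidal.ε G : 𝟙_ D ⟶ G.obj (𝟙_ C)) = 0 := by
            rw [sub_smul, one_smul, ← hunit, sub_self]
          rcases smul_eq_zero.mp this with h' | h'
          · exact hne (sub_eq_zero.mp h').symm
          · exact hεne h'
        obtain ⟨j0, hj0⟩ : ∃ j0, e j0 ≠ 0 := by
          by_contra hall
          push_neg at hall
          rw [Finset.sum_eq_zero (fun j _ => hall j)] at hsum1
          exact one_ne_zero hsum1.symm
        have he1 : e j0 = 1 := by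
          have hd := hzero j0 j0
          simp only [if_pos rfl, sub_eq_zero] at hd
          have := mul_left_cancel₀ hj0 (hd.trans (mul_one (e j0)).symm)
          exact this
        have hrest : ∀ j, j ≠ j0 → e j = 0 := by
          intro j hj
          have hd := hzero j0 j
          rw [if_neg (Ne.symm hj)] at hd
          rw [sub_zero] at hd
          rcases mul_eq_zero.mp hd with h' | h'
          · exact absurd h' hj0
          · exact h'
        have hfin : f i0 = h j0 := by
          rw [hrepr, Finset.sum_eq_single j0]
          · rw [he1, one_smul]
          · intro j _ hj
            rw [hrest j hj, zero_smul]
          · intro hj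
            exact absurd (Finset.mem_univ j0) hj
        exact Fin.succAbove_ne i0 j0 (hinj hfin).symm
  -- conclude finiteness
  by_contra hfin
  rw [not_finite_iff_infinite] at hfin
  let emb := Infinite.natEmbedding {g : F ⟶ G // NatTrans.IsMonoidal g}
  let f : Fin (Module.finrank k (F ⟶ G) + 1) → (F ⟶ G) := fun i => (emb i).1
  have hfinj : Function.Injective f := fun i j hij =>
    Fin.val_injective (emb.injective (Subtype.coe_injective hij))
  have hind := indep _ f hfinj (fun i => (emb i).2)
  have hcard := hind.fintype_card_le_finrank
  simp at hcard
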